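/- arXiv:1308.1713 — 2 statements merged into one kernel-verified Lean document; each statement's English description precedes it below -/
import Mathlib

section
/- Let μ and ν be probability measures on ℝ^d each satisfying the Poincaré inequality with constants C₁ and C₂ respectively, i.e. μ(f²) ≤ C₁ μ(|∇f|²) + μ(f)² and ν(f²) ≤ C₂ ν(|∇f|²) + ν(f)² for all f ∈ C_b¹(ℝ^d). Then the convolution μ*ν satisfies the Poincaré inequality with constant C₁ + C₂: (μ*ν)(f²) ≤ (C₁+C₂)(μ*ν)(|∇f|²) + ((μ*ν)(f))² for all f ∈ C_b¹(ℝ^d). -/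
open MeasureTheory Real Metric

/-- A probability measure `m` on `ℝ^d` satisfies the Poincaré inequality with constant `C`:
`m(f²) ≤ C·m(|∇f|²) + m(f)²` for all bounded `C¹` functions `f` with bounded gradient. -/
def PoincareIneq {d : ℕ} (m : Measure (EuclideanSpace ℝ (Fin d))) (C : ℝ) : Prop :=
  ∀ f : EuclideanSpace ℝ (Fin d) → ℝ, ContDiff ℝ 1 f →
    (∃ M, ∀ x, |f x| ≤ M) → (∃ M, ∀ x, ‖fderiv ℝ f x‖ ≤ M) →
    ∫ x, f x ^ 2 ∂m ≤ C * ∫ x, ‖fderiv ℝ f x‖ ^ 2 ∂m + (∫ x, f x ∂m) ^ 2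

/-- The convolution `μ * ν` of two measures on `ℝ^d`,
`(μ*ν)(A) = ∫∫ 1_A(x+y) μ(dx) ν(dy)`. -/
noncomputable def conv {d : ℕ} (μ ν : Measure (EuclideanSpace ℝ (Fin d))) :
    Measure (EuclideanSpace ℝ (Fin d)) :=
  (μ.prod ν).map (fun p => p.1 + p.2)

private lemma integrable_of_bdd {α : Type*} [MeasurableSpace α] {m : Measure α}
    [IsFiniteMeasure m] {h : α → ℝ} (hm : AEStronglyMeasurable h m) {B : ℝ}
    (hB : ∀ z, |h z| ≤ B) : Integrable h m :=
  Integrable.mono' (integrable_const B) hm (Filter.Eventually.of_forall fun z => by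
    simpa using hB z)

private lemma sq_integral_le {α : Type*} [MeasurableSpace α] {m : Measure α}
    [IsProbabilityMeasure m] {h : α → ℝ} (h1 : Integrable h m)
    (h2 : Integrable (fun x => h x ^ 2) m) :
    (∫ x, h x ∂m) ^ 2 ≤ ∫ x, h x ^ 2 ∂m := by
  have hm : MemLp h 2 m := (memLp_two_iff_integrable_sq h1.aestronglyMeasurable).2 h2
  have := ProbabilityTheory.variance_nonneg h m
  rw [ProbabilityTheory.variance_eq_sub hm] at this
  simpa using le_of_sub_nonneg this

set_option maxHeartbeats 2000000 in
theorem poincare_conv (d : ℕ) (μ ν : Measure (EuclideanSpace ℝ (Fin d)))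
    [IsProbabilityMeasure μ] [IsProbabilityMeasure ν]
    (C₁ C₂ : ℝ) (hC₁ : 0 < C₁) (hC₂ : 0 < C₂)
    (hμ : PoincareIneq μ C₁) (hν : PoincareIneq ν C₂) :
    PoincareIneq (conv μ ν) (C₁ + C₂) := by
  set E := EuclideanSpace ℝ (Fin d)
  rintro f hf ⟨M, hM⟩ ⟨M', hM'⟩
  have hM0 : 0 ≤ M := le_trans (abs_nonneg _) (hM 0)
  have hM'0 : 0 ≤ M' := le_trans (norm_nonneg _) (hM' 0)
  have hfc : Continuous f := hf.continuous
  have hdc : Continuous (fderiv ℝ f) := hf.continuous_fderiv one_ne_zero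
  -- integral against convolution
  have key : ∀ h : E → ℝ, Continuous h → ∀ B : ℝ, (∀ z, |h z| ≤ B) →
      ∫ z, h z ∂(conv μ ν) = ∫ y, ∫ x, h (x + y) ∂μ ∂ν := by
    intro h hc B hB
    rw [show conv μ ν = (μ.prod ν).map (fun p => p.1 + p.2) from rfl]
    have hadd : Measurable (fun p : E × E => p.1 + p.2) := by measurability
    rw [integral_map hadd.aemeasurable hc.aestronglyMeasurable]
    have hint : Integrable (fun p : E × E => h (p.1 + p.2)) (μ.prod ν) := by
      refine integrable_of_bdd
        ((hc.comp (continuous_fst.add continuous_snd)).aestronglyMeasurable)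
        (fun p => hB (p.1 + p.2))
    rw [integral_prod _ hint]
    exact integral_integral_swap (by exact hint)
  -- translate derivative
  have htr : ∀ y x : E, fderiv ℝ (fun x => f (x + y)) x = fderiv ℝ f (x + y) := by
    intro y x
    have h1 : HasFDerivAt (fun x : E => x + y) (ContinuousLinearMap.id ℝ E) x :=
      (hasFDerivAt_id x).add_const y
    have h2 : HasFDerivAt f (fderiv ℝ f (x + y)) (x + y) :=
      (hf.differentiable one_ne_zero (x + y)).hasFDerivAt
    exact (h2.comp x h1).fderiv
  set g : E → ℝ := fun y => ∫ x, f (x + y) ∂μ with hg_def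
  set G : E → (E →L[ℝ] ℝ) := fun y => ∫ x, fderiv ℝ f (x + y) ∂μ with hG_def
  set I : E → ℝ := fun y => ∫ x, ‖fderiv ℝ f (x + y)‖ ^ 2 ∂μ with hI_def
  set J : E → ℝ := fun y => ∫ x, f (x + y) ^ 2 ∂μ with hJ_def
  -- derivative of g
  have hG : ∀ y : E, HasFDerivAt g (G y) y := by
    intro y₀
    refine hasFDerivAt_integral_of_dominated_of_fderiv_le (𝕜 := ℝ)
      (F := fun y x => f (x + y)) (F' := fun y x => fderiv ℝ f (x + y))
      (bound := fun _ => M') (s := Metric.ball y₀ 1) (Metric.ball_mem_nhds y₀ one_pos) ?_ ?_ ?_ ?_ ?_ ?_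
    · exact Filter.Eventually.of_forall fun y =>
        ((hfc.comp (continuous_id.add continuous_const)).aestronglyMeasurable)
    · exact integrable_of_bdd
        ((hfc.comp (continuous_id.add continuous_const)).aestronglyMeasurable)
        (fun x => hM (x + y₀))
    · exact (hdc.comp (continuous_id.add continuous_const)).aestronglyMeasurable
    · exact Filter.Eventually.of_forall fun x y _ => hM' (x + y)
    · exact integrable_const M'
    · refine Filter.Eventually.of_forall fun x y _ => ?_
      have h1 : HasFDerivAt (fun y : E => x + y) (ContinuousLinearMap.id ℝ E) y :=
        (hasFDerivAt_id y).const_add x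
      have h2 : HasFDerivAt f (fderiv ℝ f (x + y)) (x + y) :=
        (hf.differentiable one_ne_zero (x + y)).hasFDerivAt
      have h3 := h2.comp y h1
      rw [ContinuousLinearMap.comp_id] at h3
      exact h3
  have hGc : Continuous G := by
    refine continuous_of_dominated ?_ ?_ (integrable_const M') ?_
    · exact fun y => (hdc.comp (continuous_id.add continuous_const)).aestronglyMeasurable
    · exact fun y => Filter.Eventually.of_forall fun x => hM' (x + y)
    · exact Filter.Eventually.of_forall fun x => hdc.comp (continuous_const.add continuous_id)
  have hgfd : fderiv ℝ g = G := funext fun y => (hG y).fderiv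
  have hgdiff : ContDiff ℝ 1 g := by
    rw [contDiff_one_iff_fderiv]
    exact ⟨fun y => (hG y).differentiableAt, hgfd ▸ hGc⟩
  have hgb : ∀ y, |g y| ≤ M := by
    intro y
    rw [← Real.norm_eq_abs]
    calc ‖g y‖ ≤ M * (μ Set.univ).toReal :=
          norm_integral_le_of_norm_le_const (Filter.Eventually.of_forall fun x => by
            simpa using hM (x + y))
      _ = M := by simp
  have hGb : ∀ y, ‖G y‖ ≤ M' := by
    intro y
    calc ‖G y‖ ≤ M' * (μ Set.univ).toReal :=
          norm_integral_le_of_norm_le_const (Filter.Eventually.of_forall fun x => hM' (x + y))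
      _ = M' := by simp
  -- Jensen: ‖G y‖² ≤ I y
  have hGsq : ∀ y, ‖G y‖ ^ 2 ≤ I y := by
    intro y
    have h1 : ‖G y‖ ≤ ∫ x, ‖fderiv ℝ f (x + y)‖ ∂μ := norm_integral_le_integral_norm _
    have h2 : ‖G y‖ ^ 2 ≤ (∫ x, ‖fderiv ℝ f (x + y)‖ ∂μ) ^ 2 :=
      pow_le_pow_left₀ (norm_nonneg _) h1 2
    refine h2.trans (sq_integral_le ?_ ?_)
    · exact integrable_of_bdd
        ((hdc.comp (continuous_id.add continuous_const)).norm.aestronglyMeasurable)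
        (fun x => by simpa [abs_of_nonneg (norm_nonneg _)] using hM' (x + y))
    · exact integrable_of_bdd
        (((hdc.comp (continuous_id.add continuous_const)).norm.pow 2).aestronglyMeasurable)
        (fun x => by
          rw [abs_of_nonneg (by positivity)]
          exact pow_le_pow_left₀ (norm_nonneg _) (hM' (x + y)) 2)
  -- pointwise Poincaré in μ
  have hy : ∀ y : E, J y ≤ C₁ * I y + g y ^ 2 := by
    intro y
    have h := hμ (fun x => f (x + y))
      (hf.comp ((contDiff_id).add contDiff_const))
      ⟨M, fun x => hM (x + y)⟩
      ⟨M', fun x => by rw [htr y x]; exact hM' (x + y)⟩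
    simp only [htr y] at h
    exact h
  -- continuity of I and J
  have hIcont : Continuous I := by
    refine continuous_of_dominated ?_ ?_ (integrable_const (M' ^ 2)) ?_
    · exact fun y =>
        (((hdc.comp (continuous_id.add continuous_const)).norm.pow 2).aestronglyMeasurable)
    · refine fun y => Filter.Eventually.of_forall fun x => ?_
      rw [Real.norm_eq_abs, abs_of_nonneg (by positivity)]
      exact pow_le_pow_left₀ (norm_nonneg _) (hM' (x + y)) 2
    · exact Filter.Eventually.of_forall fun x =>
        (hdc.comp (continuous_const.add continuous_id)).norm.pow 2
  have hJcont : Continuous J := by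
    refine continuous_of_dominated ?_ ?_ (integrable_const (M ^ 2)) ?_
    · exact fun y => (((hfc.comp (continuous_id.add continuous_const)).pow 2).aestronglyMeasurable)
    · refine fun y => Filter.Eventually.of_forall fun x => ?_
      rw [Real.norm_eq_abs, abs_pow]
      exact pow_le_pow_left₀ (abs_nonneg _) (hM (x + y)) 2
    · exact Filter.Eventually.of_forall fun x =>
        (hfc.comp (continuous_const.add continuous_id)).pow 2
  have hIb : ∀ y, |I y| ≤ M' ^ 2 := by
    intro y
    rw [← Real.norm_eq_abs]
    calc ‖I y‖ ≤ M' ^ 2 * (μ Set.univ).toReal :=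
          norm_integral_le_of_norm_le_const (Filter.Eventually.of_forall fun x => by
            rw [Real.norm_eq_abs, abs_of_nonneg (by positivity)]
            exact pow_le_pow_left₀ (norm_nonneg _) (hM' (x + y)) 2)
      _ = M' ^ 2 := by simp
  -- integrabilities over ν
  have hInt_I : Integrable I ν := integrable_of_bdd hIcont.aestronglyMeasurable hIb
  have hInt_J : Integrable J ν := integrable_of_bdd hJcont.aestronglyMeasurable (fun y => by
    rw [← Real.norm_eq_abs]
    calc ‖J y‖ ≤ M ^ 2 * (μ Set.univ).toReal :=
          norm_integral_le_of_norm_le_const (Filter.Eventually.of_forall fun x => by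
            rw [Real.norm_eq_abs, abs_pow]
            exact pow_le_pow_left₀ (abs_nonneg _) (hM (x + y)) 2)
      _ = M ^ 2 := by simp)
  have hgc : Continuous g := hgdiff.continuous
  have hInt_gsq : Integrable (fun y => g y ^ 2) ν :=
    integrable_of_bdd ((hgc.pow 2).aestronglyMeasurable) (fun y => by
      rw [abs_pow]; exact pow_le_pow_left₀ (abs_nonneg _) (hgb y) 2)
  have hInt_Gsq : Integrable (fun y => ‖G y‖ ^ 2) ν :=
    integrable_of_bdd ((hGc.norm.pow 2).aestronglyMeasurable) (fun y => by
      rw [abs_of_nonneg (by positivity)]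
      exact pow_le_pow_left₀ (norm_nonneg _) (hGb y) 2)
  -- Poincaré in ν for g
  have hνg : ∫ y, g y ^ 2 ∂ν ≤ C₂ * ∫ y, ‖G y‖ ^ 2 ∂ν + (∫ y, g y ∂ν) ^ 2 := by
    have h := hν g hgdiff ⟨M, hgb⟩ ⟨M', fun y => by rw [hgfd]; exact hGb y⟩
    simpa only [hgfd] using h
  -- the three identities
  have idf2 : ∫ z, f z ^ 2 ∂(conv μ ν) = ∫ y, J y ∂ν :=
    key (fun z => f z ^ 2) (hfc.pow 2) (M ^ 2) (fun z => by
      rw [abs_pow]; exact pow_le_pow_left₀ (abs_nonneg _) (hM z) 2)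
  have idgrad : ∫ z, ‖fderiv ℝ f z‖ ^ 2 ∂(conv μ ν) = ∫ y, I y ∂ν :=
    key (fun z => ‖fderiv ℝ f z‖ ^ 2) (hdc.norm.pow 2) (M' ^ 2) (fun z => by
      rw [abs_of_nonneg (by positivity)]
      exact pow_le_pow_left₀ (norm_nonneg _) (hM' z) 2)
  have idf : ∫ z, f z ∂(conv μ ν) = ∫ y, g y ∂ν := key f hfc M hM
  -- combine
  have step1 : ∫ y, J y ∂ν ≤ ∫ y, (C₁ * I y + g y ^ 2) ∂ν :=
    integral_mono hInt_J ((hInt_I.const_mul C₁).add hInt_gsq) hy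
  have step2 : ∫ y, (C₁ * I y + g y ^ 2) ∂ν = C₁ * ∫ y, I y ∂ν + ∫ y, g y ^ 2 ∂ν := by
    rw [integral_add (hInt_I.const_mul C₁) hInt_gsq, integral_const_mul]
  have step3 : ∫ y, ‖G y‖ ^ 2 ∂ν ≤ ∫ y, I y ∂ν := integral_mono hInt_Gsq hInt_I hGsq
  rw [idf2, idgrad, idf]
  have h4 : C₂ * ∫ y, ‖G y‖ ^ 2 ∂ν ≤ C₂ * ∫ y, I y ∂ν :=
    mul_le_mul_of_nonneg_left step3 hC₂.le
  nlinarith [step1, step2, hνg, h4]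
end

section
/- Let μ and ν be probability measures on ℝ^d satisfying the super Poincaré inequality with rate functions β₁ and β₂ respectively. Then μ*ν satisfies the super Poincaré inequality with β(r) := inf{β₁(r₁)β₂(r₂) : r₁, r₂ > 0, r₁ + r₂β₁(r₁) ≤ r}, i.e. (μ*ν)(f²) ≤ r (μ*ν)(|∇f|²) + β(r)((μ*ν)(|f|))² for all r > 0 and f ∈ C_b¹(ℝ^d). -/
open MeasureTheory Real

/-- A probability measure `m` on `ℝ^d` satisfies the super Poincaré inequality with rate `β`:
`m(f²) ≤ r·m(|∇f|²) + β(r)·m(|f|)²` for all `r > 0` and all bounded `C¹` functions `f`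
with bounded gradient. -/
def SuperPoincareIneq {d : ℕ} (m : Measure (EuclideanSpace ℝ (Fin d))) (β : ℝ → ℝ) : Prop :=
  ∀ r : ℝ, 0 < r → ∀ f : EuclideanSpace ℝ (Fin d) → ℝ, ContDiff ℝ 1 f →
    (∃ M, ∀ x, |f x| ≤ M) → (∃ M, ∀ x, ‖fderiv ℝ f x‖ ≤ M) →
    ∫ x, f x ^ 2 ∂m ≤ r * ∫ x, ‖fderiv ℝ f x‖ ^ 2 ∂m + β r * (∫ x, |f x| ∂m) ^ 2

/-! ### Auxiliary lemmas -/

section Phi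

lemma SPC.phi_hasDerivAt {ε : ℝ} (hε : 0 < ε) (t : ℝ) :
    HasDerivAt (fun t => Real.sqrt (t ^ 2 + ε ^ 2)) (t / Real.sqrt (t ^ 2 + ε ^ 2)) t := by
  have h : t ^ 2 + ε ^ 2 ≠ 0 := by positivity
  have h1 : HasDerivAt (fun t : ℝ => t ^ 2 + ε ^ 2) (2 * t) t := by
    simpa [mul_comm] using ((hasDerivAt_pow 2 t).add_const (ε ^ 2))
  have := (Real.hasDerivAt_sqrt h).comp t h1
  refine this.congr_deriv ?_
  have hs : Real.sqrt (t ^ 2 + ε ^ 2) ≠ 0 := by positivity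
  field_simp

lemma SPC.abs_le_phi {ε : ℝ} (t : ℝ) : |t| ≤ Real.sqrt (t ^ 2 + ε ^ 2) := by
  rw [← Real.sqrt_sq_eq_abs]
  exact Real.sqrt_le_sqrt (by nlinarith [sq_nonneg ε])

lemma SPC.phi_le_abs_add {ε : ℝ} (hε : 0 < ε) (t : ℝ) :
    Real.sqrt (t ^ 2 + ε ^ 2) ≤ |t| + ε := by
  rw [show t ^ 2 + ε ^ 2 = |t| ^ 2 + ε ^ 2 by rw [sq_abs]]
  have h : |t| ^ 2 + ε ^ 2 ≤ (|t| + ε) ^ 2 := by nlinarith [abs_nonneg t]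
  calc Real.sqrt (|t| ^ 2 + ε ^ 2) ≤ Real.sqrt ((|t| + ε) ^ 2) := Real.sqrt_le_sqrt h
    _ = |t| + ε := Real.sqrt_sq (by positivity)

end Phi

section Translate

variable {E : Type*} [NormedAddCommGroup E] [NormedSpace ℝ E] {f : E → ℝ}

lemma SPC.contDiff_translate (hf : ContDiff ℝ 1 f) (y : E) :
    ContDiff ℝ 1 (fun x => f (x + y)) :=
  hf.comp (contDiff_id.add contDiff_const)

lemma SPC.hasFDerivAt_translate (hf : ContDiff ℝ 1 f) (y x : E) :
    HasFDerivAt (fun x => f (x + y)) (fderiv ℝ f (x + y)) x := by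
  have h1 : HasFDerivAt (fun x : E => x + y) (ContinuousLinearMap.id ℝ E) x :=
    (hasFDerivAt_id x).add_const y
  have h2 := (hf.differentiable one_ne_zero (x + y)).hasFDerivAt
  have h3 := h2.comp x h1
  simp only [ContinuousLinearMap.comp_id] at h3
  exact h3

lemma SPC.fderiv_translate (hf : ContDiff ℝ 1 f) (y x : E) :
    fderiv ℝ (fun x => f (x + y)) x = fderiv ℝ f (x + y) :=
  (SPC.hasFDerivAt_translate hf y x).fderiv

end Translate

section Bdd

variable {α : Type*} [MeasurableSpace α] {m : Measure α} [IsFiniteMeasure m] {g : α → ℝ} {C : ℝ}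

lemma SPC.integrable_of_bdd (hmeas : AEStronglyMeasurable g m) (hC : ∀ x, |g x| ≤ C) :
    Integrable g m :=
  (integrable_const C).mono' hmeas (Filter.Eventually.of_forall fun x => by
    simpa [Real.norm_eq_abs] using hC x)

lemma SPC.memℒp_two_of_bdd (hmeas : AEStronglyMeasurable g m) (hC : ∀ x, |g x| ≤ C) :
    MemLp g 2 m :=
  (memLp_top_of_bound hmeas C (Filter.Eventually.of_forall fun x => by
    simpa [Real.norm_eq_abs] using hC x)).mono_exponent le_top

lemma SPC.sq_integral_le [IsProbabilityMeasure m] (hmeas : AEStronglyMeasurable g m)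
    (hC : ∀ x, |g x| ≤ C) : (∫ x, g x ∂m) ^ 2 ≤ ∫ x, g x ^ 2 ∂m := by
  have hv := ProbabilityTheory.variance_nonneg g m
  rw [ProbabilityTheory.variance_eq_sub (SPC.memℒp_two_of_bdd hmeas hC)] at hv
  simp only [Pi.pow_apply] at hv
  linarith

lemma SPC.abs_integral_le_of_bdd (hmeas : AEStronglyMeasurable g m) (hC : ∀ x, |g x| ≤ C)
    [IsProbabilityMeasure m] : |∫ x, g x ∂m| ≤ C := by
  calc |∫ x, g x ∂m| ≤ ∫ x, |g x| ∂m := by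
        simpa [Real.norm_eq_abs] using norm_integral_le_integral_norm g
    _ ≤ ∫ _x, C ∂m := integral_mono (SPC.integrable_of_bdd hmeas hC).abs (integrable_const C)
        (fun x => hC x)
    _ = C := by simp

end Bdd

section Conv

variable {d : ℕ} {μ ν : Measure (EuclideanSpace ℝ (Fin d))}
  [IsProbabilityMeasure μ] [IsProbabilityMeasure ν]

lemma SPC.conv_integral {g : EuclideanSpace ℝ (Fin d) → ℝ} (hg : Continuous g) {C : ℝ}
    (hC : ∀ x, |g x| ≤ C) :
    ∫ z, g z ∂(conv μ ν) = ∫ y, ∫ x, g (x + y) ∂μ ∂ν := by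
  have hadd : Continuous (fun p : EuclideanSpace ℝ (Fin d) × EuclideanSpace ℝ (Fin d) =>
      p.1 + p.2) := continuous_fst.add continuous_snd
  have hint : Integrable (fun p : EuclideanSpace ℝ (Fin d) × EuclideanSpace ℝ (Fin d) =>
      g (p.1 + p.2)) (μ.prod ν) :=
    SPC.integrable_of_bdd (hg.comp hadd).aestronglyMeasurable (fun p => hC _)
  rw [conv, integral_map hadd.measurable.aemeasurable hg.aestronglyMeasurable]
  rw [integral_prod _ hint]
  exact integral_integral_swap hint

lemma SPC.conv_continuous_int {g : EuclideanSpace ℝ (Fin d) → ℝ} (hg : Continuous g) {C : ℝ}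
    (hC : ∀ x, |g x| ≤ C) :
    Continuous (fun y => ∫ x, g (x + y) ∂μ) := by
  apply continuous_of_dominated (bound := fun _ => C)
  · exact fun y => (hg.comp (continuous_id.add continuous_const)).aestronglyMeasurable
  · exact fun y => Filter.Eventually.of_forall fun x => by
      simpa [Real.norm_eq_abs] using hC (x + y)
  · exact integrable_const C
  · exact Filter.Eventually.of_forall fun x =>
      hg.comp (continuous_const.add continuous_id)

lemma SPC.conv_int_abs_le {g : EuclideanSpace ℝ (Fin d) → ℝ} (hg : Continuous g) {C : ℝ}
    (hC : ∀ x, |g x| ≤ C) (y : EuclideanSpace ℝ (Fin d)) :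
    |∫ x, g (x + y) ∂μ| ≤ C :=
  SPC.abs_integral_le_of_bdd
    (hg.comp (continuous_id.add continuous_const)).aestronglyMeasurable (fun x => hC _)

lemma SPC.conv_int_integrable {g : EuclideanSpace ℝ (Fin d) → ℝ} (hg : Continuous g) {C : ℝ}
    (hC : ∀ x, |g x| ≤ C) :
    Integrable (fun y => ∫ x, g (x + y) ∂μ) ν :=
  SPC.integrable_of_bdd (SPC.conv_continuous_int hg hC).aestronglyMeasurable
    (SPC.conv_int_abs_le hg hC)

end Conv

section HE

variable {d : ℕ} {μ : Measure (EuclideanSpace ℝ (Fin d))} [IsProbabilityMeasure μ]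
  {f : EuclideanSpace ℝ (Fin d) → ℝ} {ε M M' : ℝ}

local notation "E" => EuclideanSpace ℝ (Fin d)

variable (μ f ε) in
/-- derivative integrand for the mollified function -/
noncomputable def SPC.FD (y x : EuclideanSpace ℝ (Fin d)) : EuclideanSpace ℝ (Fin d) →L[ℝ] ℝ :=
  (f (x + y) / Real.sqrt (f (x + y) ^ 2 + ε ^ 2)) • fderiv ℝ f (x + y)

namespace SPC

lemma FD_hasFDerivAt (hf : ContDiff ℝ 1 f) (hε : 0 < ε) (x y : E) :
    HasFDerivAt (fun y => Real.sqrt (f (x + y) ^ 2 + ε ^ 2)) (FD f ε y x) y := by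
  have h1 : HasFDerivAt (fun y : E => x + y) (ContinuousLinearMap.id ℝ _) y :=
    (hasFDerivAt_id y).const_add x
  have h2 : HasFDerivAt (fun y : E => f (x + y)) (fderiv ℝ f (x + y)) y := by
    have h3 := ((hf.differentiable one_ne_zero (x + y)).hasFDerivAt).comp y h1
    simp only [ContinuousLinearMap.comp_id] at h3
    exact h3
  exact (SPC.phi_hasDerivAt hε (f (x + y))).comp_hasFDerivAt (f := fun y => f (x + y)) y h2

lemma FD_norm_le (hε : 0 < ε) (y x : E) : ‖FD f ε y x‖ ≤ ‖fderiv ℝ f (x + y)‖ := by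
  have hns := norm_smul (f (x + y) / Real.sqrt (f (x + y) ^ 2 + ε ^ 2)) (fderiv ℝ f (x + y))
  rw [FD, hns]
  have h1 : |f (x + y)| ≤ Real.sqrt (f (x + y) ^ 2 + ε ^ 2) := SPC.abs_le_phi _
  have h2 : (0:ℝ) < Real.sqrt (f (x + y) ^ 2 + ε ^ 2) := by positivity
  have : ‖f (x + y) / Real.sqrt (f (x + y) ^ 2 + ε ^ 2)‖ ≤ 1 := by
    rw [Real.norm_eq_abs, abs_div, abs_of_pos h2, div_le_one h2]; exact h1
  calc ‖f (x + y) / Real.sqrt (f (x + y) ^ 2 + ε ^ 2)‖ * ‖fderiv ℝ f (x + y)‖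
      ≤ 1 * ‖fderiv ℝ f (x + y)‖ := mul_le_mul_of_nonneg_right this (norm_nonneg _)
    _ = ‖fderiv ℝ f (x + y)‖ := one_mul _

lemma FD_continuous (hf : ContDiff ℝ 1 f) (hε : 0 < ε) :
    Continuous (fun p : E × E => FD f ε p.1 p.2) := by
  have hadd : Continuous (fun p : E × E => p.2 + p.1) := continuous_snd.add continuous_fst
  have hfc : Continuous (fun p : E × E => f (p.2 + p.1)) := hf.continuous.comp hadd
  have hsqrt : Continuous (fun p : E × E => Real.sqrt (f (p.2 + p.1) ^ 2 + ε ^ 2)) :=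
    Real.continuous_sqrt.comp ((hfc.pow 2).add continuous_const)
  have hne : ∀ p : E × E, Real.sqrt (f (p.2 + p.1) ^ 2 + ε ^ 2) ≠ 0 := fun p => by positivity
  have hdf : Continuous (fun p : E × E => fderiv ℝ f (p.2 + p.1)) :=
    (hf.continuous_fderiv one_ne_zero).comp hadd
  exact (hfc.div hsqrt hne).smul hdf

lemma hE_hasFDerivAt (hf : ContDiff ℝ 1 f) (hε : 0 < ε)
    (hM : ∀ x, |f x| ≤ M) (hM' : ∀ x, ‖fderiv ℝ f x‖ ≤ M') (y₀ : E) :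
    HasFDerivAt (fun y => ∫ x, Real.sqrt (f (x + y) ^ 2 + ε ^ 2) ∂μ)
      (∫ x, FD f ε y₀ x ∂μ) y₀ := by
  have hFc : ∀ y : E, Continuous (fun x => Real.sqrt (f (x + y) ^ 2 + ε ^ 2)) := fun y =>
    Real.continuous_sqrt.comp
      (((hf.continuous.comp (continuous_id.add continuous_const)).pow 2).add continuous_const)
  apply hasFDerivAt_integral_of_dominated_of_fderiv_le (s := Metric.ball y₀ 1) (bound := fun _ => M')
    (Metric.ball_mem_nhds y₀ one_pos)
  · exact Filter.Eventually.of_forall fun y => (hFc y).aestronglyMeasurable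
  · refine (integrable_const (M + ε)).mono' (hFc y₀).aestronglyMeasurable
      (Filter.Eventually.of_forall fun x => ?_)
    rw [Real.norm_eq_abs, abs_of_nonneg (Real.sqrt_nonneg _)]
    exact (SPC.phi_le_abs_add hε _).trans (by linarith [hM (x + y₀)])
  · exact ((FD_continuous hf hε).comp (Continuous.prodMk_right y₀)).aestronglyMeasurable
  · exact Filter.Eventually.of_forall fun x y _ => (FD_norm_le hε y x).trans (hM' _)
  · exact integrable_const M'
  · exact Filter.Eventually.of_forall fun x y _ => FD_hasFDerivAt hf hε x y

lemma hE_contDiff (hf : ContDiff ℝ 1 f) (hε : 0 < ε)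
    (hM : ∀ x, |f x| ≤ M) (hM' : ∀ x, ‖fderiv ℝ f x‖ ≤ M') :
    ContDiff ℝ 1 (fun y => ∫ x, Real.sqrt (f (x + y) ^ 2 + ε ^ 2) ∂μ) := by
  rw [contDiff_one_iff_fderiv]
  have hd : ∀ y : E, HasFDerivAt (fun y => ∫ x, Real.sqrt (f (x + y) ^ 2 + ε ^ 2) ∂μ)
      (∫ x, FD f ε y x ∂μ) y := hE_hasFDerivAt hf hε hM hM'
  refine ⟨fun y => (hd y).differentiableAt, ?_⟩
  have : fderiv ℝ (fun y => ∫ x, Real.sqrt (f (x + y) ^ 2 + ε ^ 2) ∂μ)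
      = fun y => ∫ x, FD f ε y x ∂μ := funext fun y => (hd y).fderiv
  rw [this]
  apply continuous_of_dominated (bound := fun _ => M')
  · exact fun y => ((FD_continuous hf hε).comp (Continuous.prodMk_right y)).aestronglyMeasurable
  · exact fun y => Filter.Eventually.of_forall fun x => (FD_norm_le hε y x).trans (hM' _)
  · exact integrable_const M'
  · exact Filter.Eventually.of_forall fun x =>
      (FD_continuous hf hε).comp (continuous_id.prodMk continuous_const)

lemma hE_fderiv_norm_le (hf : ContDiff ℝ 1 f) (hε : 0 < ε)
    (hM : ∀ x, |f x| ≤ M) (hM' : ∀ x, ‖fderiv ℝ f x‖ ≤ M') (y : E) :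
    ‖fderiv ℝ (fun y => ∫ x, Real.sqrt (f (x + y) ^ 2 + ε ^ 2) ∂μ) y‖
      ≤ ∫ x, ‖fderiv ℝ f (x + y)‖ ∂μ := by
  rw [(hE_hasFDerivAt hf hε hM hM' y).fderiv]
  calc ‖∫ x, FD f ε y x ∂μ‖ ≤ ∫ x, ‖FD f ε y x‖ ∂μ := norm_integral_le_integral_norm _
    _ ≤ ∫ x, ‖fderiv ℝ f (x + y)‖ ∂μ := by
        apply integral_mono _ _ (fun x => FD_norm_le hε y x)
        · refine (integrable_const M').mono'
            (((FD_continuous hf hε).comp (Continuous.prodMk_right y)).norm).aestronglyMeasurable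
            (Filter.Eventually.of_forall fun x => ?_)
          simpa using (FD_norm_le hε y x).trans (hM' _)
        · refine (integrable_const M').mono'
            (((hf.continuous_fderiv one_ne_zero).comp
              (continuous_id.add continuous_const)).norm).aestronglyMeasurable
            (Filter.Eventually.of_forall fun x => ?_)
          simpa using hM' (x + y)

end SPC

end HE

section Key

variable {d : ℕ}

local notation "E" => EuclideanSpace ℝ (Fin d)

lemma SPC.key (μ ν : Measure (EuclideanSpace ℝ (Fin d)))
    [IsProbabilityMeasure μ] [IsProbabilityMeasure ν]
    (β₁ β₂ : ℝ → ℝ) (hβ₁ : ∀ r, 0 < r → 0 < β₁ r) (hβ₂ : ∀ r, 0 < r → 0 < β₂ r)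
    (hμ : SuperPoincareIneq μ β₁) (hν : SuperPoincareIneq ν β₂)
    {r₁ r₂ : ℝ} (h1 : 0 < r₁) (h2 : 0 < r₂)
    (f : EuclideanSpace ℝ (Fin d) → ℝ) (hf : ContDiff ℝ 1 f)
    {M M' : ℝ} (hM : ∀ x, |f x| ≤ M) (hM' : ∀ x, ‖fderiv ℝ f x‖ ≤ M') :
    ∫ z, f z ^ 2 ∂(conv μ ν) ≤ (r₁ + r₂ * β₁ r₁) * ∫ z, ‖fderiv ℝ f z‖ ^ 2 ∂(conv μ ν)
      + (β₁ r₁ * β₂ r₂) * (∫ z, |f z| ∂(conv μ ν)) ^ 2 := by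
  have hM0 : 0 ≤ M := le_trans (abs_nonneg _) (hM 0)
  have hM'0 : 0 ≤ M' := le_trans (norm_nonneg _) (hM' 0)
  have hfc : Continuous f := hf.continuous
  have hdfc : Continuous (fderiv ℝ f) := hf.continuous_fderiv one_ne_zero
  -- bounded continuous integrands
  have hgsq : Continuous (fun z : E => f z ^ 2) := hfc.pow 2
  have hgsqb : ∀ z : E, |f z ^ 2| ≤ M ^ 2 := fun z => by
    rw [abs_pow]
    exact pow_le_pow_left₀ (abs_nonneg _) (hM z) 2
  have hgD : Continuous (fun z : E => ‖fderiv ℝ f z‖ ^ 2) := hdfc.norm.pow 2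
  have hgDb : ∀ z : E, |‖fderiv ℝ f z‖ ^ 2| ≤ M' ^ 2 := fun z => by
    rw [abs_pow, abs_norm]
    exact pow_le_pow_left₀ (norm_nonneg _) (hM' z) 2
  have hga : Continuous (fun z : E => |f z|) := hfc.abs
  have hgab : ∀ z : E, |(|f z|)| ≤ M := fun z => by rw [abs_abs]; exact hM z
  have hgn : Continuous (fun z : E => ‖fderiv ℝ f z‖) := hdfc.norm
  have hgnb : ∀ z : E, |‖fderiv ℝ f z‖| ≤ M' := fun z => by rw [abs_norm]; exact hM' z
  -- the three conv integrals as iterated integrals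
  have eq2 : ∫ z, f z ^ 2 ∂(conv μ ν) = ∫ y, ∫ x, f (x + y) ^ 2 ∂μ ∂ν :=
    SPC.conv_integral hgsq hgsqb
  have eqD : ∫ z, ‖fderiv ℝ f z‖ ^ 2 ∂(conv μ ν)
      = ∫ y, ∫ x, ‖fderiv ℝ f (x + y)‖ ^ 2 ∂μ ∂ν := SPC.conv_integral hgD hgDb
  have eqa : ∫ z, |f z| ∂(conv μ ν) = ∫ y, ∫ x, |f (x + y)| ∂μ ∂ν :=
    SPC.conv_integral hga hgab
  set h₀ : E → ℝ := fun y => ∫ x, |f (x + y)| ∂μ with hh₀def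
  set D : E → ℝ := fun y => ∫ x, ‖fderiv ℝ f (x + y)‖ ^ 2 ∂μ with hDdef
  set K : ℝ := ∫ y, D y ∂ν with hKdef
  set c₀ : ℝ := ∫ y, h₀ y ∂ν with hc₀def
  -- integrability facts over ν
  have hI2int : Integrable (fun y => ∫ x, f (x + y) ^ 2 ∂μ) ν :=
    SPC.conv_int_integrable hgsq hgsqb
  have hDint : Integrable D ν := SPC.conv_int_integrable hgD hgDb
  have hh₀cont : Continuous h₀ := SPC.conv_continuous_int hga hgab
  have hh₀b : ∀ y, |h₀ y| ≤ M := SPC.conv_int_abs_le hga hgab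
  have hh₀nonneg : ∀ y, 0 ≤ h₀ y := fun y => integral_nonneg fun x => abs_nonneg _
  have hh₀int : Integrable h₀ ν := SPC.integrable_of_bdd hh₀cont.aestronglyMeasurable hh₀b
  have hh₀sqint : Integrable (fun y => h₀ y ^ 2) ν :=
    SPC.integrable_of_bdd (hh₀cont.pow 2).aestronglyMeasurable (fun y => by
      rw [abs_pow]
      exact pow_le_pow_left₀ (abs_nonneg _) (hh₀b y) 2)
  -- Step B+C : apply SP for μ fiberwise and integrate
  have hpt : ∀ y : E, ∫ x, f (x + y) ^ 2 ∂μ ≤ r₁ * D y + β₁ r₁ * h₀ y ^ 2 := by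
    intro y
    have hfd : ∀ x, ‖fderiv ℝ (fun x => f (x + y)) x‖ ≤ M' := fun x => by
      rw [SPC.fderiv_translate hf y x]; exact hM' _
    have := hμ r₁ h1 (fun x => f (x + y)) (SPC.contDiff_translate hf y)
      ⟨M, fun x => hM _⟩ ⟨M', hfd⟩
    have hrw : (∫ x, ‖fderiv ℝ (fun x => f (x + y)) x‖ ^ 2 ∂μ) = D y := by
      apply integral_congr_ae (Filter.Eventually.of_forall fun x => ?_)
      rw [SPC.fderiv_translate hf y x]
    rw [hrw] at this
    exact this
  have stepC : ∫ z, f z ^ 2 ∂(conv μ ν) ≤ r₁ * K + β₁ r₁ * ∫ y, h₀ y ^ 2 ∂ν := by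
    rw [eq2]
    calc ∫ y, ∫ x, f (x + y) ^ 2 ∂μ ∂ν ≤ ∫ y, (r₁ * D y + β₁ r₁ * h₀ y ^ 2) ∂ν :=
          integral_mono hI2int ((hDint.const_mul r₁).add (hh₀sqint.const_mul (β₁ r₁))) hpt
      _ = r₁ * K + β₁ r₁ * ∫ y, h₀ y ^ 2 ∂ν := by
          rw [integral_add (hDint.const_mul r₁) (hh₀sqint.const_mul (β₁ r₁)),
            integral_const_mul, integral_const_mul, ← hKdef]
  -- Step D : for every ε > 0
  have stepD : ∀ ε : ℝ, 0 < ε →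
      ∫ y, h₀ y ^ 2 ∂ν ≤ r₂ * K + β₂ r₂ * (c₀ + ε) ^ 2 := by
    intro ε hε
    set hE : E → ℝ := fun y => ∫ x, Real.sqrt (f (x + y) ^ 2 + ε ^ 2) ∂μ with hhEdef
    have hφc : Continuous (fun z : E => Real.sqrt (f z ^ 2 + ε ^ 2)) :=
      Real.continuous_sqrt.comp ((hfc.pow 2).add continuous_const)
    have hφb : ∀ z : E, |Real.sqrt (f z ^ 2 + ε ^ 2)| ≤ M + ε := fun z => by
      rw [abs_of_nonneg (Real.sqrt_nonneg _)]
      exact (SPC.phi_le_abs_add hε _).trans (by linarith [hM z])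
    have hhEcd : ContDiff ℝ 1 hE := SPC.hE_contDiff hf hε hM hM'
    have hhEcont : Continuous hE := hhEcd.continuous
    have hhEb : ∀ y, |hE y| ≤ M + ε := SPC.conv_int_abs_le hφc hφb
    have hhEnonneg : ∀ y, 0 ≤ hE y := fun y => integral_nonneg fun x => Real.sqrt_nonneg _
    have hhEge : ∀ y, h₀ y ≤ hE y := fun y =>
      integral_mono
        (SPC.integrable_of_bdd
          ((hga.comp (continuous_id.add continuous_const))).aestronglyMeasurable
          (fun x => hgab _))
        (SPC.integrable_of_bdd
          ((hφc.comp (continuous_id.add continuous_const))).aestronglyMeasurable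
          (fun x => hφb _))
        (fun x => SPC.abs_le_phi _)
    have hhEle : ∀ y, hE y ≤ h₀ y + ε := by
      intro y
      have hint1 : Integrable (fun x => |f (x + y)|) μ :=
        SPC.integrable_of_bdd
          (show AEStronglyMeasurable (fun x => |f (x + y)|) μ from
            ((hga.comp (continuous_id.add continuous_const))).aestronglyMeasurable)
          (fun x => hgab _)
      have hsum : ∫ x, (|f (x + y)| + ε) ∂μ = h₀ y + ε := by
        rw [integral_add hint1 (integrable_const ε)]
        simp [hh₀def]
      have hle : ∫ x, Real.sqrt (f (x + y) ^ 2 + ε ^ 2) ∂μ ≤ ∫ x, (|f (x + y)| + ε) ∂μ :=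
        integral_mono
          (SPC.integrable_of_bdd
            ((hφc.comp (continuous_id.add continuous_const))).aestronglyMeasurable
            (fun x => hφb _))
          (hint1.add (integrable_const ε))
          (fun x => SPC.phi_le_abs_add hε _)
      rw [hsum] at hle
      exact hle
    -- bound on gradient of hE
    have hG : ∀ y, ‖fderiv ℝ hE y‖ ≤ ∫ x, ‖fderiv ℝ f (x + y)‖ ∂μ :=
      SPC.hE_fderiv_norm_le hf hε hM hM'
    have hGb : ∀ y : E, |∫ x, ‖fderiv ℝ f (x + y)‖ ∂μ| ≤ M' := SPC.conv_int_abs_le hgn hgnb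
    have hhEfb : ∀ y, ‖fderiv ℝ hE y‖ ≤ M' := fun y =>
      (hG y).trans (le_trans (le_abs_self _) (hGb y))
    -- apply SP for ν
    have hSP := hν r₂ h2 hE hhEcd ⟨M + ε, hhEb⟩ ⟨M', hhEfb⟩
    -- |hE| = hE
    have habs : (∫ y, |hE y| ∂ν) = ∫ y, hE y ∂ν :=
      integral_congr_ae (Filter.Eventually.of_forall fun y => abs_of_nonneg (hhEnonneg y))
    rw [habs] at hSP
    -- ∫ h₀² ≤ ∫ hE²
    have hsq1 : ∫ y, h₀ y ^ 2 ∂ν ≤ ∫ y, hE y ^ 2 ∂ν :=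
      integral_mono hh₀sqint
        (SPC.integrable_of_bdd (hhEcont.pow 2).aestronglyMeasurable (fun y => by
          rw [abs_pow]
          exact pow_le_pow_left₀ (abs_nonneg _) (hhEb y) 2))
        (fun y => pow_le_pow_left₀ (hh₀nonneg y) (hhEge y) 2)
    -- ∫ ‖∇hE‖² ≤ K
    have hsq2 : ∫ y, ‖fderiv ℝ hE y‖ ^ 2 ∂ν ≤ K := by
      rw [hKdef]
      apply integral_mono
        (SPC.integrable_of_bdd ((hhEcd.continuous_fderiv one_ne_zero).norm.pow 2).aestronglyMeasurable
          (fun y => by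
            rw [Pi.pow_apply, abs_pow, abs_norm]
            exact pow_le_pow_left₀ (norm_nonneg _) (hhEfb y) 2))
        hDint
      intro y
      have hJ : (∫ x, ‖fderiv ℝ f (x + y)‖ ∂μ) ^ 2 ≤ D y :=
        SPC.sq_integral_le
          ((hgn.comp (continuous_id.add continuous_const))).aestronglyMeasurable
          (fun x => hgnb _)
      calc ‖fderiv ℝ hE y‖ ^ 2 ≤ (∫ x, ‖fderiv ℝ f (x + y)‖ ∂μ) ^ 2 :=
            pow_le_pow_left₀ (norm_nonneg _) (hG y) 2
        _ ≤ D y := hJ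
    -- ∫ hE ≤ c₀ + ε
    have hmean : ∫ y, hE y ∂ν ≤ c₀ + ε := by
      have hsum : ∫ y, (h₀ y + ε) ∂ν = c₀ + ε := by
        rw [integral_add hh₀int (integrable_const ε)]
        simp [hc₀def]
      have hle : ∫ y, hE y ∂ν ≤ ∫ y, (h₀ y + ε) ∂ν := integral_mono
        (SPC.integrable_of_bdd hhEcont.aestronglyMeasurable hhEb)
        (hh₀int.add (integrable_const ε)) (fun y => hhEle y)
      rw [hsum] at hle
      exact hle
    have hmean0 : 0 ≤ ∫ y, hE y ∂ν := integral_nonneg hhEnonneg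
    have hmeansq : (∫ y, hE y ∂ν) ^ 2 ≤ (c₀ + ε) ^ 2 := pow_le_pow_left₀ hmean0 hmean 2
    have hb2 : 0 ≤ β₂ r₂ := (hβ₂ r₂ h2).le
    calc ∫ y, h₀ y ^ 2 ∂ν ≤ ∫ y, hE y ^ 2 ∂ν := hsq1
      _ ≤ r₂ * ∫ y, ‖fderiv ℝ hE y‖ ^ 2 ∂ν + β₂ r₂ * (∫ y, hE y ∂ν) ^ 2 := hSP
      _ ≤ r₂ * K + β₂ r₂ * (c₀ + ε) ^ 2 := by
          have := mul_le_mul_of_nonneg_left hsq2 h2.le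
          have := mul_le_mul_of_nonneg_left hmeansq hb2
          linarith
  -- Step E : let ε → 0
  have stepE : ∫ y, h₀ y ^ 2 ∂ν ≤ r₂ * K + β₂ r₂ * c₀ ^ 2 := by
    have htend : Filter.Tendsto (fun ε : ℝ => r₂ * K + β₂ r₂ * (c₀ + ε) ^ 2)
        (nhdsWithin 0 (Set.Ioi 0)) (nhds (r₂ * K + β₂ r₂ * c₀ ^ 2)) := by
      have hc : Continuous (fun ε : ℝ => r₂ * K + β₂ r₂ * (c₀ + ε) ^ 2) :=
        continuous_const.add (continuous_const.mul
          ((continuous_const.add continuous_id).pow 2))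
      have := hc.tendsto 0
      simp only [add_zero] at this
      exact this.mono_left nhdsWithin_le_nhds
    exact ge_of_tendsto htend (eventually_mem_nhdsWithin.mono fun ε hε => stepD ε hε)
  -- combine
  have hb1 : 0 ≤ β₁ r₁ := (hβ₁ r₁ h1).le
  have hfinal := mul_le_mul_of_nonneg_left stepE hb1
  rw [eqD, eqa]
  calc ∫ z, f z ^ 2 ∂(conv μ ν) ≤ r₁ * K + β₁ r₁ * ∫ y, h₀ y ^ 2 ∂ν := stepC
    _ ≤ r₁ * K + β₁ r₁ * (r₂ * K + β₂ r₂ * c₀ ^ 2) := by linarith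
    _ = (r₁ + r₂ * β₁ r₁) * K + β₁ r₁ * β₂ r₂ * c₀ ^ 2 := by ring

end Key

theorem superPoincare_conv (d : ℕ) (μ ν : Measure (EuclideanSpace ℝ (Fin d)))
    [IsProbabilityMeasure μ] [IsProbabilityMeasure ν]
    (β₁ β₂ : ℝ → ℝ) (hβ₁ : ∀ r, 0 < r → 0 < β₁ r) (hβ₂ : ∀ r, 0 < r → 0 < β₂ r)
    (hμ : SuperPoincareIneq μ β₁) (hν : SuperPoincareIneq ν β₂) :
    SuperPoincareIneq (conv μ ν)
      (fun r => sInf {b : ℝ | ∃ r₁ r₂ : ℝ, 0 < r₁ ∧ 0 < r₂ ∧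
        r₁ + r₂ * β₁ r₁ ≤ r ∧ b = β₁ r₁ * β₂ r₂}) := by
  intro r hr f hf hfb hfd
  obtain ⟨M, hM⟩ := hfb
  obtain ⟨M', hM'⟩ := hfd
  set S : Set ℝ := {b : ℝ | ∃ r₁ r₂ : ℝ, 0 < r₁ ∧ 0 < r₂ ∧
    r₁ + r₂ * β₁ r₁ ≤ r ∧ b = β₁ r₁ * β₂ r₂} with hSdef
  have hb1 : 0 < β₁ (r / 2) := hβ₁ _ (by linarith)
  have hSne : S.Nonempty := by
    refine ⟨β₁ (r / 2) * β₂ (r / (2 * β₁ (r / 2))), r / 2, r / (2 * β₁ (r / 2)), by linarith,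
      by positivity, ?_, rfl⟩
    have h : r / (2 * β₁ (r / 2)) * β₁ (r / 2) = r / 2 := by
      field_simp [hb1.ne']
    linarith
  set I2 : ℝ := ∫ z, f z ^ 2 ∂(conv μ ν) with hI2
  set ID : ℝ := ∫ z, ‖fderiv ℝ f z‖ ^ 2 ∂(conv μ ν) with hID
  set I1 : ℝ := ∫ z, |f z| ∂(conv μ ν) with hI1
  have hIDnn : 0 ≤ ID := integral_nonneg fun z => by positivity
  have hI1nn : 0 ≤ I1 := integral_nonneg fun z => abs_nonneg _
  have hbound : ∀ b ∈ S, I2 ≤ r * ID + b * I1 ^ 2 := by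
    rintro b ⟨r₁, r₂, h1, h2, hle, rfl⟩
    have hkey := SPC.key μ ν β₁ β₂ hβ₁ hβ₂ hμ hν h1 h2 f hf hM hM'
    have : (r₁ + r₂ * β₁ r₁) * ID ≤ r * ID := mul_le_mul_of_nonneg_right hle hIDnn
    rw [← hI2, ← hID, ← hI1] at hkey
    linarith
  rcases eq_or_lt_of_le hI1nn with hI1z | hI1pos
  · obtain ⟨b₀, hb₀⟩ := hSne
    have := hbound b₀ hb₀
    rw [← hI1z] at this ⊢
    simpa using this
  · have hI1sq : (0:ℝ) < I1 ^ 2 := by positivity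
    have hdiv : (I2 - r * ID) / I1 ^ 2 ≤ sInf S := by
      apply le_csInf hSne
      intro b hb
      rw [div_le_iff₀ hI1sq]
      linarith [hbound b hb]
    rw [div_le_iff₀ hI1sq] at hdiv
    linarith
end
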